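/- arXiv:1307.7002 — 5 statements merged into one kernel-verified Lean document; each statement's English description precedes it below -/
import Mathlib

section
/- Let f : ℝⁿ → ℝ be C² on a box K, and for each finite set S = {x₁, …, x_i} ⊂ K define the underestimator t_i⁻(x) := max over a ∈ S of (f(a) + ∇f(a)·(x − a) − (γ/2)‖x − a‖²), where γ is large enough that f is γ-semiconvex on K and γ ≥ sup_{x∈K} ‖D²f(x)‖. Then there exists a constant C > 0 (independent of i) such that for all i ≥ 1 and all x ∈ K, 0 ≤ f(x) − t_i⁻(x) ≤ C · d(x, S)², where d(x, S) is the Euclidean distance from x to the set S. -/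
/-!
Each quadratic minorant `t_a` lies below `f` on `K` by assumption. Conversely, semiconvexity
with base point `x`, evaluated at `a`, gives
`f x - t_a x ≤ ⟪∇f x - ∇f a, x - a⟫ + γ ‖x - a‖²`, and on the convex set `K` the bound
`‖D²f‖ ≤ γ` makes `∇f` `γ`-Lipschitz, so `f x - t_a x ≤ 2γ ‖x - a‖²`. Taking for `a` the
control point nearest to `x` bounds `f x - t_i⁻ x` by `2γ d(x, S)²`.
-/

open Set

theorem convex_box {ι : Type*} (lo hi : EuclideanSpace ℝ ι) :
    Convex ℝ {x : EuclideanSpace ℝ ι | ∀ i, lo i ≤ x i ∧ x i ≤ hi i} := by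
  have hbox : {x : EuclideanSpace ℝ ι | ∀ i, lo i ≤ x i ∧ x i ≤ hi i}
      = ⋂ i, EuclideanSpace.proj i ⁻¹' Icc (lo i) (hi i) := by
    ext x
    simp
  rw [hbox]
  exact convex_iInter fun i => (convex_Icc _ _).linear_preimage (EuclideanSpace.projₗ i)

section Gradient

variable {E : Type*} [NormedAddCommGroup E] [InnerProductSpace ℝ E] [CompleteSpace E]

theorem norm_gradient_sub_gradient (f : E → ℝ) (x a : E) :
    ‖gradient f x - gradient f a‖ = ‖fderiv ℝ f x - fderiv ℝ f a‖ := by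
  rw [gradient, gradient, ← map_sub, LinearIsometryEquiv.norm_map]

theorem Convex.norm_gradient_sub_le_of_norm_iteratedFDeriv_two_le {s : Set E} (hs : Convex ℝ s)
    {f : E → ℝ} (hf : ContDiff ℝ 2 f) {γ : ℝ}
    (hbound : ∀ x ∈ s, ‖iteratedFDeriv ℝ 2 f x‖ ≤ γ) {a x : E} (ha : a ∈ s) (hx : x ∈ s) :
    ‖gradient f x - gradient f a‖ ≤ γ * ‖x - a‖ := by
  have hdf : Differentiable ℝ (fderiv ℝ f) :=
    (hf.fderiv_right le_rfl).differentiable one_ne_zero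
  have hnorm (y : E) : ‖fderiv ℝ (fderiv ℝ f) y‖ = ‖iteratedFDeriv ℝ 2 f y‖ := by
    rw [← norm_iteratedFDeriv_one, norm_iteratedFDeriv_fderiv]
  rw [norm_gradient_sub_gradient]
  exact hs.norm_image_sub_le_of_norm_fderiv_le (fun y _ => hdf y)
    (fun y hy => (hnorm y).trans_le (hbound y hy)) ha hx

noncomputable def quadMinorant (f : E → ℝ) (γ : ℝ) (a x : E) : ℝ :=
  f a + inner ℝ (gradient f a) (x - a) - γ / 2 * ‖x - a‖ ^ 2

theorem sub_quadMinorant_le {f : E → ℝ} {γ : ℝ} {a x : E}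
    (hsemi : quadMinorant f γ x a ≤ f a)
    (hlip : ‖gradient f x - gradient f a‖ ≤ γ * ‖x - a‖) :
    f x - quadMinorant f γ a x ≤ 2 * γ * ‖x - a‖ ^ 2 := by
  have hcross : inner ℝ (gradient f x - gradient f a) (x - a) ≤ γ * ‖x - a‖ ^ 2 :=
    calc inner ℝ (gradient f x - gradient f a) (x - a)
        ≤ ‖gradient f x - gradient f a‖ * ‖x - a‖ := real_inner_le_norm _ _
      _ ≤ γ * ‖x - a‖ * ‖x - a‖ := by gcongr
      _ = γ * ‖x - a‖ ^ 2 := by ring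
  rw [quadMinorant, norm_sub_rev, ← neg_sub x a, inner_neg_right] at hsemi
  rw [inner_sub_left] at hcross
  rw [quadMinorant]
  linarith

end Gradient

theorem Finset.sub_sup'_le_mul_inf'_sq {α : Type*} {S : Finset α} (hS : S.Nonempty)
    {g d : α → ℝ} {y C : ℝ} (h : ∀ a ∈ S, y - g a ≤ C * d a ^ 2) :
    y - S.sup' hS g ≤ C * S.inf' hS d ^ 2 := by
  obtain ⟨a, haS, hmin⟩ := S.exists_mem_eq_inf' hS d
  rw [hmin]
  exact (sub_le_sub_left (S.le_sup' g haS) y).trans (h a haS)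

/-- Quadratic error bound for the max-plus underestimator built from a finite
set `S` of control points (Lemma `space1`). -/
theorem maxplus_underestimator_error_bound
    (n : ℕ) (K : Set (EuclideanSpace ℝ (Fin n)))
    (lo hi : EuclideanSpace ℝ (Fin n))
    (hK : K = {x | ∀ i, lo i ≤ x i ∧ x i ≤ hi i})
    (f : EuclideanSpace ℝ (Fin n) → ℝ) (hf : ContDiff ℝ 2 f)
    (γ : ℝ)
    (hsemi : ∀ a ∈ K, ∀ x ∈ K,
      f a + inner ℝ (gradient f a) (x - a) - γ / 2 * ‖x - a‖ ^ 2 ≤ f x)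
    (hγ : ∀ x ∈ K, ‖iteratedFDeriv ℝ 2 f x‖ ≤ γ) :
    ∃ C > 0, ∀ (S : Finset (EuclideanSpace ℝ (Fin n))) (hS : S.Nonempty),
      ↑S ⊆ K → ∀ x ∈ K,
        0 ≤ f x - S.sup' hS
              (fun a => f a + inner ℝ (gradient f a) (x - a) - γ / 2 * ‖x - a‖ ^ 2)
        ∧ f x - S.sup' hS
              (fun a => f a + inner ℝ (gradient f a) (x - a) - γ / 2 * ‖x - a‖ ^ 2)
            ≤ C * (S.inf' hS fun a => ‖x - a‖) ^ 2 := by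
  have hKconv : Convex ℝ K := hK ▸ convex_box lo hi
  refine ⟨max (2 * γ) 1, by positivity, fun S hS hSK x hx => ⟨?_, ?_⟩⟩
  · exact sub_nonneg.2 (Finset.sup'_le _ _ fun a ha => hsemi a (hSK ha) x hx)
  · refine Finset.sub_sup'_le_mul_inf'_sq hS fun a ha => ?_
    calc f x - quadMinorant f γ a x ≤ 2 * γ * ‖x - a‖ ^ 2 :=
          sub_quadMinorant_le (hsemi x hx a (hSK ha))
            (hKconv.norm_gradient_sub_le_of_norm_iteratedFDeriv_two_le hf hγ (hSK ha) hx)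
      _ ≤ max (2 * γ) 1 * ‖x - a‖ ^ 2 := by gcongr; exact le_max_left _ _
end

section
/- For all a, x ∈ ℝ, arctan(x) ≤ arctan(a) + (x − a)/(1 + a²) + (3√3/16)(x − a)². -/
/-!
Subtracting `(M / 2) y ^ 2` from a function whose second derivative is at most `M` leaves a
concave function, which lies below each of its tangent lines; this is Taylor's bound with a
one-sided second-order remainder. For `arctan` the second derivative is `-2x / (1 + x²)²`, whose
maximum `3√3 / 8` is attained at `x = -1/√3`.
-/

open Set

theorem ConcaveOn.le_add_mul_sub_of_hasDerivAt {S : Set ℝ} {f : ℝ → ℝ} {f' a x : ℝ}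
    (hf : ConcaveOn ℝ S f) (ha : a ∈ S) (hx : x ∈ S) (hd : HasDerivAt f f' a) :
    f x ≤ f a + f' * (x - a) := by
  rcases lt_trichotomy a x with hax | rfl | hxa
  · have := hf.slope_le_of_hasDerivAt ha hx hax hd
    rw [slope_def_field, div_le_iff₀ (sub_pos.mpr hax)] at this
    linarith
  · simp
  · have := hf.le_slope_of_hasDerivAt hx ha hxa hd
    rw [slope_def_field, le_div_iff₀ (sub_pos.mpr hxa)] at this
    linarith

theorem le_add_mul_sub_add_sq_of_hasDerivAt_of_le {f f' f'' : ℝ → ℝ} {M : ℝ}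
    (hf : ∀ y, HasDerivAt f (f' y) y) (hf' : ∀ y, HasDerivAt f' (f'' y) y)
    (hM : ∀ y, f'' y ≤ M) (a x : ℝ) :
    f x ≤ f a + f' a * (x - a) + M / 2 * (x - a) ^ 2 := by
  have hg : ∀ y, HasDerivAt (fun y ↦ f y - M / 2 * y ^ 2) (f' y - M * y) y := fun y ↦
    ((hf y).fun_sub ((hasDerivAt_pow 2 y).const_mul (M / 2))).congr_deriv (by ring)
  have hg' : ∀ y, HasDerivAt (fun y ↦ f' y - M * y) (f'' y - M) y := fun y ↦
    ((hf' y).fun_sub ((hasDerivAt_id y).const_mul M)).congr_deriv (by ring)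
  have hconc : ConcaveOn ℝ univ (fun y ↦ f y - M / 2 * y ^ 2) :=
    concaveOn_of_hasDerivWithinAt2_nonpos convex_univ
      (fun y _ ↦ (hg y).continuousAt.continuousWithinAt)
      (fun y _ ↦ (hg y).hasDerivWithinAt) (fun y _ ↦ (hg' y).hasDerivWithinAt)
      (fun y _ ↦ sub_nonpos.mpr (hM y))
  have := hconc.le_add_mul_sub_of_hasDerivAt (mem_univ a) (mem_univ x) (hg a)
  linear_combination this

theorem Real.hasDerivAt_inv_one_add_sq (x : ℝ) :
    HasDerivAt (fun y : ℝ ↦ (1 + y ^ 2)⁻¹) (-(2 * x) / (1 + x ^ 2) ^ 2) x := by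
  simpa using ((hasDerivAt_pow 2 x).const_add 1).fun_inv (by positivity)

theorem neg_two_mul_div_one_add_sq_sq_le (x : ℝ) :
    -(2 * x) / (1 + x ^ 2) ^ 2 ≤ 3 * Real.sqrt 3 / 8 := by
  have h3 : Real.sqrt 3 ^ 2 = 3 := Real.sq_sqrt (by norm_num)
  have h1 : 1 ≤ Real.sqrt 3 := Real.one_le_sqrt.mpr (by norm_num)
  have hquad : 0 ≤ Real.sqrt 3 * x ^ 2 - 2 * x + 3 * Real.sqrt 3 := by
    nlinarith [sq_nonneg (x - 1), mul_nonneg (sub_nonneg.mpr h1) (sq_nonneg x)]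
  have hfactor : 3 * Real.sqrt 3 * (1 + x ^ 2) ^ 2 + 16 * x
      = (Real.sqrt 3 * x + 1) ^ 2 * (Real.sqrt 3 * x ^ 2 - 2 * x + 3 * Real.sqrt 3) := by
    linear_combination (-(Real.sqrt 3 * x ^ 4 + 3 * Real.sqrt 3 * x ^ 2 + 6 * x)) * h3
  rw [div_le_div_iff₀ (by positivity) (by norm_num)]
  linarith [mul_nonneg (sq_nonneg (Real.sqrt 3 * x + 1)) hquad]

/-- Global quadratic overestimator (parabola above) for `arctan`. -/
theorem arctan_quadratic_overestimator :
    ∀ a x : ℝ,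
      Real.arctan x ≤ Real.arctan a + (x - a) / (1 + a ^ 2)
        + (3 * Real.sqrt 3 / 16) * (x - a) ^ 2 := by
  intro a x
  have := le_add_mul_sub_add_sq_of_hasDerivAt_of_le Real.hasDerivAt_arctan'
    Real.hasDerivAt_inv_one_add_sq neg_two_mul_div_one_add_sq_sq_le a x
  rw [inv_mul_eq_div] at this
  linarith
end

section
/- Let Δ(x₁,…,x₆) := x₁x₄(−x₁+x₂+x₃−x₄+x₅+x₆) + x₂x₅(x₁−x₂+x₃+x₄−x₅+x₆) + x₃x₆(x₁+x₂−x₃+x₄+x₅−x₆) − x₂x₃x₄ − x₁x₃x₅ − x₁x₂x₆ − x₄x₅x₆. Then for all x ∈ [4, 6.3504]⁶, Δ(x) ≥ 128. -/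
noncomputable def flyD (x₁ x₂ x₃ x₄ x₅ x₆ : ℝ) : ℝ :=
  x₁ * x₄ * (-x₁ + x₂ + x₃ - x₄ + x₅ + x₆)
    + x₂ * x₅ * (x₁ - x₂ + x₃ + x₄ - x₅ + x₆)
    + x₃ * x₆ * (x₁ + x₂ - x₃ + x₄ + x₅ - x₆)
    - x₂ * x₃ * x₄ - x₁ * x₃ * x₅ - x₁ * x₂ * x₆ - x₄ * x₅ * x₆

lemma flyD_red1 (x₁ x₂ x₃ x₄ x₅ x₆ : ℝ) (ha : 4 ≤ x₁) (hb : x₁ ≤ 6.3504)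
    (hc : 0 ≤ x₄) :
    ∃ y, (y = 4 ∨ y = 6.3504) ∧
      flyD y x₂ x₃ x₄ x₅ x₆ ≤ flyD x₁ x₂ x₃ x₄ x₅ x₆ := by
  rcases le_total (flyD 4 x₂ x₃ x₄ x₅ x₆) (flyD 6.3504 x₂ x₃ x₄ x₅ x₆) with h | h
  · refine ⟨4, Or.inl rfl, ?_⟩
    unfold flyD at *
    nlinarith [mul_nonneg (mul_nonneg (sub_nonneg.2 ha) (sub_nonneg.2 hb)) hc,
      mul_nonneg (sub_nonneg.2 ha) (sub_nonneg.2 h)]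
  · refine ⟨6.3504, Or.inr rfl, ?_⟩
    unfold flyD at *
    nlinarith [mul_nonneg (mul_nonneg (sub_nonneg.2 ha) (sub_nonneg.2 hb)) hc,
      mul_nonneg (sub_nonneg.2 hb) (sub_nonneg.2 h)]

lemma flyD_sym (x₁ x₂ x₃ x₄ x₅ x₆ : ℝ) :
    flyD x₁ x₂ x₃ x₄ x₅ x₆ = flyD x₂ x₃ x₁ x₅ x₆ x₄ := by
  unfold flyD; ring

lemma flyD_swap (x₁ x₂ x₃ x₄ x₅ x₆ : ℝ) :
    flyD x₁ x₂ x₃ x₄ x₅ x₆ = flyD x₄ x₅ x₃ x₁ x₂ x₆ := by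
  unfold flyD; ring

/-- Flyspeck Lemma 4717061266: the polynomial `Δ` is at least `128` on the
box `[4, 6.3504]⁶`. -/
theorem flyspeck_delta_ge_128
    (x₁ x₂ x₃ x₄ x₅ x₆ : ℝ)
    (h₁ : x₁ ∈ Set.Icc (4 : ℝ) 6.3504) (h₂ : x₂ ∈ Set.Icc (4 : ℝ) 6.3504)
    (h₃ : x₃ ∈ Set.Icc (4 : ℝ) 6.3504) (h₄ : x₄ ∈ Set.Icc (4 : ℝ) 6.3504)
    (h₅ : x₅ ∈ Set.Icc (4 : ℝ) 6.3504) (h₆ : x₆ ∈ Set.Icc (4 : ℝ) 6.3504) :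
    x₁ * x₄ * (-x₁ + x₂ + x₃ - x₄ + x₅ + x₆)
      + x₂ * x₅ * (x₁ - x₂ + x₃ + x₄ - x₅ + x₆)
      + x₃ * x₆ * (x₁ + x₂ - x₃ + x₄ + x₅ - x₆)
      - x₂ * x₃ * x₄ - x₁ * x₃ * x₅ - x₁ * x₂ * x₆ - x₄ * x₅ * x₆ ≥ 128 := by
  obtain ⟨a₁, b₁⟩ := h₁; obtain ⟨a₂, b₂⟩ := h₂; obtain ⟨a₃, b₃⟩ := h₃
  obtain ⟨a₄, b₄⟩ := h₄; obtain ⟨a₅, b₅⟩ := h₅; obtain ⟨a₆, b₆⟩ := h₆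
  show flyD x₁ x₂ x₃ x₄ x₅ x₆ ≥ 128
  have box : ∀ y : ℝ, (y = 4 ∨ y = 6.3504) → 4 ≤ y ∧ y ≤ 6.3504 ∧ (0:ℝ) ≤ y := by
    rintro y (rfl | rfl) <;> norm_num
  -- reduce x₁ (quadratic coeff is x₄)
  obtain ⟨y₁, hy₁, le₁⟩ := flyD_red1 x₁ x₂ x₃ x₄ x₅ x₆ a₁ b₁ (by linarith)
  -- reduce x₂ : coeff x₅ ; flyD y₁ x₂ x₃ x₄ x₅ x₆ = flyD x₂ x₃ y₁ x₅ x₆ x₄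
  obtain ⟨y₂, hy₂, le₂⟩ := flyD_red1 x₂ x₃ y₁ x₅ x₆ x₄ a₂ b₂ (by linarith)
  -- reduce x₃ : flyD y₂ x₃ y₁ x₅ x₆ x₄ = flyD x₃ y₁ y₂ x₆ x₄ x₅
  obtain ⟨y₃, hy₃, le₃⟩ := flyD_red1 x₃ y₁ y₂ x₆ x₄ x₅ a₃ b₃ (by linarith)
  -- reduce x₄ : flyD y₃ y₁ y₂ x₆ x₄ x₅ = flyD x₆ x₄ y₂ y₃ y₁ x₅ ? no.
  -- use swap: flyD y₃ y₁ y₂ x₆ x₄ x₅ = flyD x₆ x₄ y₂ y₃ y₁ x₅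
  obtain ⟨y₆, hy₆, le₄⟩ := flyD_red1 x₆ x₄ y₂ y₃ y₁ x₅ a₆ b₆ (box y₃ hy₃).2.2
  -- now flyD y₆ x₄ y₂ y₃ y₁ x₅ ; rotate: = flyD x₄ y₂ y₆ y₁ x₅ y₃
  obtain ⟨y₄, hy₄, le₅⟩ := flyD_red1 x₄ y₂ y₆ y₁ x₅ y₃ a₄ b₄ (box y₁ hy₁).2.2
  -- flyD y₄ y₂ y₆ y₁ x₅ y₃ ; rotate: = flyD y₂ y₆ y₄ x₅ y₃ y₁
  obtain ⟨y₅, hy₅, le₆⟩ := flyD_red1 x₅ y₃ y₄ y₂ y₆ y₁ a₅ b₅ (box y₂ hy₂).2.2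
  have chain : flyD y₅ y₃ y₄ y₂ y₆ y₁ ≤ flyD x₁ x₂ x₃ x₄ x₅ x₆ := by
    calc flyD y₅ y₃ y₄ y₂ y₆ y₁ ≤ flyD x₅ y₃ y₄ y₂ y₆ y₁ := le₆
      _ = flyD y₄ y₂ y₆ y₁ x₅ y₃ := by unfold flyD; ring
      _ ≤ flyD x₄ y₂ y₆ y₁ x₅ y₃ := le₅
      _ = flyD y₆ x₄ y₂ y₃ y₁ x₅ := by unfold flyD; ring
      _ ≤ flyD x₆ x₄ y₂ y₃ y₁ x₅ := le₄
      _ = flyD y₃ y₁ y₂ x₆ x₄ x₅ := by unfold flyD; ring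
      _ ≤ flyD x₃ y₁ y₂ x₆ x₄ x₅ := le₃
      _ = flyD y₂ x₃ y₁ x₅ x₆ x₄ := by unfold flyD; ring
      _ ≤ flyD x₂ x₃ y₁ x₅ x₆ x₄ := le₂
      _ = flyD y₁ x₂ x₃ x₄ x₅ x₆ := by unfold flyD; ring
      _ ≤ flyD x₁ x₂ x₃ x₄ x₅ x₆ := le₁
  have vert : (128:ℝ) ≤ flyD y₅ y₃ y₄ y₂ y₆ y₁ := by
    rcases hy₅ with rfl | rfl <;> rcases hy₃ with rfl | rfl <;>
      rcases hy₁ with rfl | rfl <;> rcases hy₂ with rfl | rfl <;>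
      rcases hy₆ with rfl | rfl <;> rcases hy₄ with rfl | rfl <;>
      unfold flyD <;> norm_num
  linarith
end

section
/- Let f : [m, M] → ℝ be C² with |f''(x)| ≤ γ for all x ∈ [m, M], and let A ⊂ [m, M] be a finite nonempty set of control points with fill distance h := sup_{x ∈ [m,M]} min_{a ∈ A} |x − a|. Define t⁻(x) := max_{a ∈ A} (f(a) + f'(a)(x − a) − (γ/2)(x − a)²). Then t⁻ ≤ f on [m, M] and sup_{x ∈ [m,M]} (f(x) − t⁻(x)) ≤ γ h². -/
/-!
The tangent parabola `f a + f' a (x - a) - γ/2 (x - a)²` lies below `f` because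
`f + γ/2 t²` has second derivative `f'' + γ ≥ 0`, hence is convex and lies above its tangent
lines; symmetrically `f` lies below `f a + f' a (x - a) + γ/2 (x - a)²`. The two parabolas at
`a` differ by `γ (x - a)²`, so using a control point `a` nearest to `x` bounds the gap by `γ h²`.
-/

open Set

theorem ConvexOn.add_mul_sub_le_of_hasDerivWithinAt {S : Set ℝ} {f : ℝ → ℝ} {x y f' : ℝ}
    (hfc : ConvexOn ℝ S f) (hx : x ∈ S) (hy : y ∈ S) (hf' : HasDerivWithinAt f f' S x) :
    f x + f' * (y - x) ≤ f y := by
  rcases lt_trichotomy x y with hxy | rfl | hyx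
  · have hslope := hfc.le_slope_of_hasDerivWithinAt hx hy hxy hf'
    rw [slope_def_field, le_div_iff₀ (sub_pos.2 hxy)] at hslope
    linarith
  · simp
  · have hslope := hfc.slope_le_of_hasDerivWithinAt hy hx hyx hf'
    rw [slope_def_field, div_le_iff₀ (sub_pos.2 hyx)] at hslope
    linarith

section TaylorBound

variable {D : Set ℝ} {f f' f'' : ℝ → ℝ} {γ x y : ℝ}

theorem tangent_sub_sq_le_of_deriv2_ge (hD : Convex ℝ D) (hf : ContinuousOn f D)
    (hf' : ∀ x ∈ D, HasDerivWithinAt f (f' x) D x)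
    (hf'' : ∀ x ∈ interior D, HasDerivWithinAt f' (f'' x) (interior D) x)
    (hγ : ∀ x ∈ interior D, -γ ≤ f'' x) (hx : x ∈ D) (hy : y ∈ D) :
    f x + f' x * (y - x) - γ / 2 * (y - x) ^ 2 ≤ f y := by
  have hquad : ∀ (s : Set ℝ) t, HasDerivWithinAt (fun u => γ / 2 * u ^ 2) (γ * t) s t :=
    fun s t => ((hasDerivAt_pow 2 t).const_mul (γ / 2)).hasDerivWithinAt.congr_deriv (by ring)
  have hconvex : ConvexOn ℝ D (fun t => f t + γ / 2 * t ^ 2) := by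
    refine convexOn_of_hasDerivWithinAt2_nonneg (f' := fun t => f' t + γ * t)
      (f'' := fun t => f'' t + γ) hD (hf.add (by fun_prop))
      (fun t ht => ((hf' t (interior_subset ht)).mono interior_subset).add (hquad _ t))
      (fun t ht => (hf'' t ht).add (((hasDerivWithinAt_id t _).const_mul γ).congr_deriv
        (mul_one γ)))
      (fun t ht => by linarith [hγ t ht])
  have htangent := hconvex.add_mul_sub_le_of_hasDerivWithinAt hx hy ((hf' x hx).add (hquad D x))
  linear_combination htangent

theorem abs_sub_tangent_le_of_abs_deriv2_le (hD : Convex ℝ D) (hf : ContinuousOn f D)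
    (hf' : ∀ x ∈ D, HasDerivWithinAt f (f' x) D x)
    (hf'' : ∀ x ∈ interior D, HasDerivWithinAt f' (f'' x) (interior D) x)
    (hγ : ∀ x ∈ interior D, |f'' x| ≤ γ) (hx : x ∈ D) (hy : y ∈ D) :
    |f y - (f x + f' x * (y - x))| ≤ γ / 2 * (y - x) ^ 2 := by
  have hlower := tangent_sub_sq_le_of_deriv2_ge hD hf hf' hf''
    (fun t ht => (abs_le.1 (hγ t ht)).1) hx hy
  have hupper := tangent_sub_sq_le_of_deriv2_ge (f := -f) (f' := -f') (f'' := -f'') hD hf.neg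
    (fun t ht => (hf' t ht).neg) (fun t ht => (hf'' t ht).neg)
    (fun t ht => neg_le_neg (abs_le.1 (hγ t ht)).2) hx hy
  simp only [Pi.neg_apply] at hupper
  rw [abs_le]
  constructor <;> linarith

end TaylorBound

theorem ContDiffOn.hasDerivAt_derivWithin_Icc {f : ℝ → ℝ} {m M x : ℝ}
    (hf : ContDiffOn ℝ 2 f (Icc m M)) (hx : x ∈ Ioo m M) :
    HasDerivAt (derivWithin f (Icc m M)) (iteratedDerivWithin 2 f (Icc m M) x) x := by
  have hderiv : ContDiffOn ℝ 1 (derivWithin f (Icc m M)) (Icc m M) :=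
    hf.derivWithin (uniqueDiffOn_Icc (hx.1.trans hx.2)) (by norm_num)
  rw [iteratedDerivWithin_succ', iteratedDerivWithin_one]
  exact ((hderiv.differentiableOn one_ne_zero x (Ioo_subset_Icc_self hx)).hasDerivWithinAt
    ).hasDerivAt (Icc_mem_nhds hx.1 hx.2)

/-- `O(h²)` error bound for the univariate max-plus (supremum of parabolas)
underestimator built from a finite set `A` of control points with fill
distance `h`. -/
theorem maxplus_univariate_error_bound
    (f : ℝ → ℝ) (m M γ h : ℝ)
    (hf : ContDiffOn ℝ 2 f (Set.Icc m M))
    (hγ : ∀ x ∈ Set.Icc m M, |iteratedDerivWithin 2 f (Set.Icc m M) x| ≤ γ)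
    (A : Finset ℝ) (hA : A.Nonempty) (hAK : ↑A ⊆ Set.Icc m M)
    (hfill : ∀ x ∈ Set.Icc m M, A.inf' hA (fun a => |x - a|) ≤ h) :
    ∀ x ∈ Set.Icc m M,
      A.sup' hA (fun a =>
          f a + derivWithin f (Set.Icc m M) a * (x - a) - γ / 2 * (x - a) ^ 2)
        ≤ f x
      ∧ f x - A.sup' hA (fun a =>
          f a + derivWithin f (Set.Icc m M) a * (x - a) - γ / 2 * (x - a) ^ 2)
        ≤ γ * h ^ 2 := by
  intro x hx
  have htaylor : ∀ a ∈ A, |f x - (f a + derivWithin f (Icc m M) a * (x - a))| ≤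
      γ / 2 * (x - a) ^ 2 := by
    refine fun a ha => abs_sub_tangent_le_of_abs_deriv2_le (convex_Icc m M) hf.continuousOn
      (fun t ht => (hf.differentiableOn (by norm_num) t ht).hasDerivWithinAt) ?_
      (fun t ht => hγ t (interior_subset ht)) (hAK ha) hx
    rw [interior_Icc]
    exact fun t ht => (hf.hasDerivAt_derivWithin_Icc ht).hasDerivWithinAt
  refine ⟨Finset.sup'_le _ _ fun a ha => by linarith [(abs_le.1 (htaylor a ha)).1], ?_⟩
  obtain ⟨a, ha, hnearest⟩ := Finset.exists_mem_eq_inf' hA (fun a => |x - a|)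
  have hdist : (x - a) ^ 2 ≤ h ^ 2 := by
    rw [← sq_abs]
    exact pow_le_pow_left₀ (abs_nonneg _) (hnearest ▸ hfill x hx) 2
  have hγh : γ * (x - a) ^ 2 ≤ γ * h ^ 2 :=
    mul_le_mul_of_nonneg_left hdist ((abs_nonneg _).trans (hγ x hx))
  linarith [(abs_le.1 (htaylor a ha)).2, Finset.le_sup' (fun a =>
    f a + derivWithin f (Icc m M) a * (x - a) - γ / 2 * (x - a) ^ 2) ha]
end

section
/- Let A = ([a_ij, b_ij]) be an n×n interval matrix, and let λ ∈ ℝ be such that every symmetric matrix M with a_ij ≤ M_ij ≤ b_ij for all i, j satisfies λ_min(M) ≥ λ. Let f : ℝⁿ → ℝ be C², x* a point, and B a convex set containing x* such that for all x ∈ B the symmetric matrix D²f(x) − D²f(x*) has all entries within the corresponding intervals [a_ij, b_ij]. Then for all x ∈ B, f(x) ≥ f(x*) + ∇f(x*)·(x − x*) + (1/2)(x−x*)ᵀ D²f(x*) (x−x*) + (λ/2)‖x − x*‖². -/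
/-!
Restrict `f` to the segment `t ↦ x* + t (x - x*)`. The second derivative of the restriction at
`t` is `D²f(y) v v` with `y` in `B` and `v = x - x*`; the matrix of `D²f(y) - D²f(x*)` in the
standard basis is symmetric and lies in the interval matrix, so this second derivative is at least
`D²f(x*) v v + λ‖v‖²`. A one-variable function whose second derivative is bounded below by `c`
on `[0, 1]` lies above its second-order Taylor polynomial at `0` with `c` in place of `g''(0)`.
-/

open Matrix Set

theorem quadratic_minorant_of_le_second_deriv {g g' g'' : ℝ → ℝ} {c : ℝ}
    (hg : ∀ t ∈ Icc (0 : ℝ) 1, HasDerivAt g (g' t) t)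
    (hg' : ∀ t ∈ Icc (0 : ℝ) 1, HasDerivAt g' (g'' t) t)
    (hc : ∀ t ∈ Icc (0 : ℝ) 1, c ≤ g'' t) :
    g 0 + g' 0 + c / 2 ≤ g 1 := by
  have hφ : ∀ t ∈ Icc (0 : ℝ) 1,
      HasDerivAt (fun s => g s - c / 2 * s ^ 2) (g' t - c * t) t := fun t ht => by
    refine ((hg t ht).fun_sub ((hasDerivAt_pow 2 t).const_mul (c / 2))).congr_deriv ?_
    norm_num
    ring
  have hφ' : ∀ t ∈ Icc (0 : ℝ) 1, HasDerivAt (fun s => g' s - c * s) (g'' t - c) t :=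
    fun t ht => by simpa using (hg' t ht).fun_sub ((hasDerivAt_id' t).const_mul c)
  -- `g - c t² / 2` is convex, so it lies above its tangent line at `0`.
  have hconv : ConvexOn ℝ (Icc (0 : ℝ) 1) (fun s => g s - c / 2 * s ^ 2) := by
    refine convexOn_of_hasDerivWithinAt2_nonneg (convex_Icc 0 1)
      (fun t ht => (hφ t ht).continuousAt.continuousWithinAt)
      (fun t ht => (hφ t (interior_subset ht)).hasDerivWithinAt)
      (fun t ht => (hφ' t (interior_subset ht)).hasDerivWithinAt)
      (fun t ht => sub_nonneg.2 (hc t (interior_subset ht)))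
  have htangent := hconv.le_slope_of_hasDerivAt (left_mem_Icc.2 zero_le_one)
    (right_mem_Icc.2 zero_le_one) zero_lt_one (hφ 0 (left_mem_Icc.2 zero_le_one))
  rw [slope_def_field] at htangent
  norm_num at htangent
  linarith

section

variable {ι : Type*} [Fintype ι] [DecidableEq ι]

theorem dotProduct_mulVec_of_apply_single
    (D : EuclideanSpace ℝ ι →L[ℝ] EuclideanSpace ℝ ι →L[ℝ] ℝ) (v w : EuclideanSpace ℝ ι) :
    (fun i => v i) ⬝ᵥ (of fun i j => D (EuclideanSpace.single i 1) (EuclideanSpace.single j 1))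
      *ᵥ (fun i => w i) = D v w := by
  conv_rhs => rw [← (EuclideanSpace.basisFun ι ℝ).sum_repr v,
    ← (EuclideanSpace.basisFun ι ℝ).sum_repr w]
  simp only [dotProduct, mulVec, of_apply, Finset.mul_sum, EuclideanSpace.basisFun_repr,
    EuclideanSpace.basisFun_apply, map_sum, map_smul, _root_.sum_apply, _root_.smul_apply,
    smul_eq_mul, mul_left_comm]
  rw [Finset.sum_comm]
  exact Finset.sum_congr rfl fun _ _ => Finset.sum_congr rfl fun _ _ => by ring

theorem mul_norm_sq_le_of_interval_enclosure {a b : Matrix ι ι ℝ} {lam : ℝ}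
    (hlam : ∀ M : Matrix ι ι ℝ, M.IsSymm → (∀ i j, a i j ≤ M i j ∧ M i j ≤ b i j) →
      ∀ v : EuclideanSpace ℝ ι, lam * ‖v‖ ^ 2 ≤ (fun i => v i) ⬝ᵥ M.mulVec (fun i => v i))
    {Δ : EuclideanSpace ℝ ι →L[ℝ] EuclideanSpace ℝ ι →L[ℝ] ℝ} (hΔ : ∀ u w, Δ u w = Δ w u)
    (hencl : ∀ i j, a i j ≤ Δ (EuclideanSpace.single i 1) (EuclideanSpace.single j 1) ∧
      Δ (EuclideanSpace.single i 1) (EuclideanSpace.single j 1) ≤ b i j)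
    (v : EuclideanSpace ℝ ι) :
    lam * ‖v‖ ^ 2 ≤ Δ v v :=
  dotProduct_mulVec_of_apply_single Δ v v ▸ hlam _ (Matrix.ext fun _ _ => hΔ _ _) hencl v

end

section

variable {E G : Type*} [NormedAddCommGroup E] [NormedSpace ℝ E]
  [NormedAddCommGroup G] [NormedSpace ℝ G] {x v : E} {t : ℝ}

theorem hasDerivAt_comp_add_smul {F : E → G} (hF : DifferentiableAt ℝ F (x + t • v)) :
    HasDerivAt (fun s : ℝ => F (x + s • v)) (fderiv ℝ F (x + t • v) v) t :=
  hF.hasFDerivAt.comp_hasDerivAt t (by simpa using ((hasDerivAt_id t).smul_const v).const_add x)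

theorem hasDerivAt_fderiv_comp_add_smul {f : E → G}
    (hf : DifferentiableAt ℝ (fderiv ℝ f) (x + t • v)) :
    HasDerivAt (fun s : ℝ => fderiv ℝ f (x + s • v) v)
      (fderiv ℝ (fderiv ℝ f) (x + t • v) v v) t := by
  simpa using (hasDerivAt_comp_add_smul hf).clm_apply (hasDerivAt_const t v)

end

/-- Robust interval-matrix eigenvalue bound combined with the second-order
Taylor underestimator: if every symmetric matrix within the interval matrix
`[a, b]` has smallest eigenvalue at least `λ`, and the Hessian difference
`D²f(x) − D²f(x*)` stays entrywise within `[a, b]` on the convex set `B`,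
then the quadratic Taylor model shifted by `(λ/2)‖x − x*‖²` underestimates
`f` on `B`. -/
theorem robust_interval_hessian_underestimator
    (n : ℕ) (a b : Matrix (Fin n) (Fin n) ℝ) (lam : ℝ)
    (hlam : ∀ M : Matrix (Fin n) (Fin n) ℝ, M.IsSymm →
      (∀ i j, a i j ≤ M i j ∧ M i j ≤ b i j) →
      ∀ v : EuclideanSpace ℝ (Fin n),
        lam * ‖v‖ ^ 2 ≤ (fun i => v i) ⬝ᵥ M.mulVec (fun i => v i))
    (f : EuclideanSpace ℝ (Fin n) → ℝ) (hf : ContDiff ℝ 2 f)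
    (xs : EuclideanSpace ℝ (Fin n))
    (B : Set (EuclideanSpace ℝ (Fin n))) (hB : Convex ℝ B) (hxs : xs ∈ B)
    (hencl : ∀ x ∈ B, ∀ i j,
      a i j ≤ iteratedFDeriv ℝ 2 f x ![EuclideanSpace.single i 1, EuclideanSpace.single j 1]
              - iteratedFDeriv ℝ 2 f xs ![EuclideanSpace.single i 1, EuclideanSpace.single j 1]
      ∧ iteratedFDeriv ℝ 2 f x ![EuclideanSpace.single i 1, EuclideanSpace.single j 1]
              - iteratedFDeriv ℝ 2 f xs ![EuclideanSpace.single i 1, EuclideanSpace.single j 1]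
            ≤ b i j) :
    ∀ x ∈ B,
      f x ≥ f xs + inner ℝ (gradient f xs) (x - xs)
        + (1 / 2) * iteratedFDeriv ℝ 2 f xs ![x - xs, x - xs]
        + lam / 2 * ‖x - xs‖ ^ 2 := by
  intro x hx
  set v := x - xs
  have hf₁ : Differentiable ℝ f := hf.differentiable (by norm_num)
  have hf₂ : Differentiable ℝ (fderiv ℝ f) :=
    (hf.fderiv_right (m := 1) le_rfl).differentiable one_ne_zero
  have hsymm : ∀ y u w, fderiv ℝ (fderiv ℝ f) y u w = fderiv ℝ (fderiv ℝ f) y w u :=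
    fun y => hf.contDiffAt.isSymmSndFDerivAt (by simp)
  have hcurv : ∀ t ∈ Icc (0 : ℝ) 1, fderiv ℝ (fderiv ℝ f) xs v v + lam * ‖v‖ ^ 2 ≤
      fderiv ℝ (fderiv ℝ f) (xs + t • v) v v := fun t ht => by
    have hy : xs + t • v ∈ B := hB.add_smul_sub_mem hxs hx ht
    have hquad := mul_norm_sq_le_of_interval_enclosure hlam
      (Δ := fderiv ℝ (fderiv ℝ f) (xs + t • v) - fderiv ℝ (fderiv ℝ f) xs)
      (fun u w => by simp only [_root_.sub_apply, hsymm _ u w])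
      (by simpa only [iteratedFDeriv_two_apply, Matrix.cons_val_zero, Matrix.cons_val_one,
        _root_.sub_apply] using hencl _ hy) v
    simp only [_root_.sub_apply] at hquad
    linarith
  have htaylor := quadratic_minorant_of_le_second_deriv
    (fun _ _ => hasDerivAt_comp_add_smul (hf₁ _))
    (fun _ _ => hasDerivAt_fderiv_comp_add_smul (hf₂ _)) hcurv
  simp only [zero_smul, add_zero, one_smul, v, add_sub_cancel] at htaylor
  rw [inner_gradient_left, iteratedFDeriv_two_apply]
  simp only [Matrix.cons_val_zero, Matrix.cons_val_one]
  linarith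
end
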